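/- Let W be a finite group acting by ring automorphisms on a commutative ring R, with invariant subring R^W, and let I ⊆ R be an ideal. Let ψ : R → (R/I) ⊗_{R^W} R be the ring homomorphism x ↦ 1 ⊗ x. Then a prime ideal of R contains ker(ψ) if and only if it contains w(I) for some w ∈ W; equivalently, the radical of ker(ψ) equals the radical of ⋂_{w∈W} w(I), i.e. the closed image of the second projection Spec((R/I) ⊗_{R^W} R) → Spec(R) is the finite union ⋃_{w∈W} V(w(I)). -/

import Mathlib

/-!
Let a finite group `W` act on a commutative ring `R` by ring automorphisms, with invariant
subring `R^W`, and let `I ⊆ R` be an ideal.  Let `ψ : R → (R/I) ⊗_{R^W} R` be the ring map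
`x ↦ 1 ⊗ x`.  Then a prime ideal of `R` contains `ker ψ` if and only if it contains `w(I)` for
some `w ∈ W` (i.e. the closed image of `Spec((R/I) ⊗_{R^W} R) → Spec R` is `⋃_w V(w(I))`).
-/

open scoped TensorProduct

set_option synthInstance.maxHeartbeats 1000000
set_option maxHeartbeats 2000000

noncomputable section

/-- The invariant subring `R^W` of a group action by ring automorphisms. -/
def invariantSubring (W : Type) [Group W] (R : Type) [CommRing R] [MulSemiringAction W R] :
    Subring R where
  carrier := {r | ∀ w : W, w • r = r}
  zero_mem' := fun w => by simp
  one_mem' := fun w => by simp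
  add_mem' := fun hs ht w => by rw [smul_add, hs w, ht w]
  mul_mem' := fun hs ht w => by rw [smul_mul', hs w, ht w]
  neg_mem' := fun hs w => by rw [smul_neg, hs w]

variable (W : Type) [Group W] (R : Type) [CommRing R] [MulSemiringAction W R] (I : Ideal R)

/-- The canonical map `ψ : R → (R/I) ⊗_{R^W} R`, `x ↦ 1 ⊗ x`. -/
def psiMap : R →ₐ[invariantSubring W R] ((R ⧸ I) ⊗[invariantSubring W R] R) :=
  Algebra.TensorProduct.includeRight

/-- **Support of `(R/I) ⊗_{R^W} R` over `Spec R`.**  A prime ideal of `R` contains the kernel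
of `ψ : R → (R/I) ⊗_{R^W} R` if and only if it contains `w(I)` for some `w ∈ W`. -/
theorem ker_tensor_over_invariants_le_prime_iff
    [Finite W] (p : Ideal R) (hp : p.IsPrime) :
    RingHom.ker (psiMap W R I) ≤ p ↔
      ∃ w : W, I.map (MulSemiringAction.toRingHom W R w) ≤ p := by
  set A := invariantSubring W R
  constructor
  · -- forward direction: via the norm element
    intro hker
    by_contra hcon
    push_neg at hcon
    have := Fintype.ofFinite W
    -- for each w, `I` is not contained in the prime `p.comap σ_w`
    have hnot : ∀ w : W, ¬ I ≤ p.comap (MulSemiringAction.toRingHom W R w) := by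
      intro w hle
      exact hcon w (Ideal.map_le_iff_le_comap.2 hle)
    -- prime avoidance: find x ∈ I with w • x ∉ p for all w
    have hprime : ∀ w : W, (p.comap (MulSemiringAction.toRingHom W R w)).IsPrime :=
      fun w => Ideal.IsPrime.comap _
    have havoid : ¬ ((I : Set R) ⊆
        ⋃ w ∈ ((Finset.univ : Finset W) : Set W), (p.comap (MulSemiringAction.toRingHom W R w) : Set R)) := by
      rw [Ideal.subset_union_prime (1 : W) (1 : W) (fun w _ _ _ => hprime w)]
      rintro ⟨w, -, hw⟩
      exact hnot w hw
    rw [Set.not_subset] at havoid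
    obtain ⟨x, hxI, hx⟩ := havoid
    simp only [Set.mem_iUnion, not_exists, Finset.coe_univ, Set.mem_univ, exists_prop,
      true_and] at hx
    have hxp : ∀ w : W, w • x ∉ p := fun w hw => hx w hw
    -- the norm of x
    set N : R := ∏ w : W, w • x with hN
    have hNinv : ∀ v : W, v • N = N := by
      intro v
      rw [hN]
      calc v • ∏ w : W, w • x
          = MulSemiringAction.toRingHom W R v (∏ w : W, w • x) := rfl
        _ = ∏ w : W, MulSemiringAction.toRingHom W R v (w • x) := map_prod _ _ _
        _ = ∏ w : W, (v * w) • x := by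
              refine Finset.prod_congr rfl fun w _ => ?_
              show v • w • x = (v * w) • x
              rw [mul_smul]
        _ = ∏ w : W, w • x := Fintype.prod_equiv (Equiv.mulLeft v) _ _ (fun w => rfl)
    have hNI : N ∈ I := by
      classical
      rw [hN, ← Finset.mul_prod_erase Finset.univ _ (Finset.mem_univ (1 : W)), one_smul]
      exact I.mul_mem_right _ hxI
    have hNp : N ∉ p := by
      rw [hN]
      intro hmem
      rw [Ideal.IsPrime.prod_mem_iff] at hmem
      obtain ⟨w, -, hw⟩ := hmem
      exact hxp w hw
    -- N ∈ ker ψ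
    have hNker : N ∈ RingHom.ker (psiMap W R I) := by
      have ha : (⟨N, hNinv⟩ : A) • (1 : R) = N := by
        show (N : R) * 1 = N
        rw [mul_one]
      have hb : (⟨N, hNinv⟩ : A) • (1 : R ⧸ I) = 0 := by
        show (Ideal.Quotient.mk I N) * 1 = 0
        rw [mul_one, Ideal.Quotient.eq_zero_iff_mem]
        exact hNI
      have : (psiMap W R I) N = (1 : R ⧸ I) ⊗ₜ[A] N := rfl
      rw [RingHom.mem_ker, this, ← ha, ← TensorProduct.smul_tmul, hb,
        TensorProduct.zero_tmul]
    exact hNp (hker hNker)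
  · rintro ⟨w, hw⟩
    intro x hx
    -- build a map (R/I) ⊗[A] R →ₐ[A] R ⧸ I.map σ,  a ⊗ b ↦ σ(a) * b
    set σ := MulSemiringAction.toRingHom W R w with hσ
    set J := I.map σ with hJ
    have hIJ : ∀ a ∈ I, σ a ∈ J := fun a ha => Ideal.mem_map_of_mem σ ha
    let q : R →+* R ⧸ J := Ideal.Quotient.mk J
    let f0 : (R ⧸ I) →+* R ⧸ J :=
      Ideal.Quotient.lift I (q.comp σ) (fun a ha => by
        simpa [q, Ideal.Quotient.eq_zero_iff_mem] using hIJ a ha)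
    have hcomm : ∀ a : A, f0 (algebraMap A (R ⧸ I) a) = algebraMap A (R ⧸ J) a := by
      intro a
      have : algebraMap A (R ⧸ I) a = Ideal.Quotient.mk I (a : R) := rfl
      rw [this]
      have : f0 (Ideal.Quotient.mk I (a : R)) = q (σ (a : R)) := rfl
      rw [this]
      have hinv : σ (a : R) = (a : R) := a.2 w
      rw [hinv]; rfl
    let f : (R ⧸ I) →ₐ[A] R ⧸ J := { f0 with commutes' := hcomm }
    let g : R →ₐ[A] R ⧸ J := Ideal.Quotient.mkₐ A J
    let φ : ((R ⧸ I) ⊗[A] R) →ₐ[A] R ⧸ J :=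
      Algebra.TensorProduct.lift f g (fun _ _ => Commute.all _ _)
    have hx0 : (psiMap W R I) x = 0 := hx
    have : φ ((psiMap W R I) x) = Ideal.Quotient.mk J x := by
      have h1 : (psiMap W R I) x = (1 : R ⧸ I) ⊗ₜ[A] x := rfl
      rw [h1, show φ = Algebra.TensorProduct.lift f g (fun _ _ => Commute.all _ _) from rfl,
        Algebra.TensorProduct.lift_tmul]
      simp [f, g]
    rw [hx0, map_zero] at this
    have hxJ : x ∈ J := by
      rwa [eq_comm, Ideal.Quotient.eq_zero_iff_mem] at this
    exact hw hxJ

end
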